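/- If (X,T) is a minimal TDS whose maximal equicontinuous factor map π_eq has some finite fiber, then min_{y ∈ X_eq} #π_eq^{-1}(y) is attained and finite, and the set { y ∈ X_eq : #π_eq^{-1}(y) = m } is a dense G_δ subset of X_eq, where m = min_{y} #π_eq^{-1}(y). [Stated as: the fiber-cardinality function attains its minimum on a dense G_δ set.] -/
import Mathlib


/-- For a minimal system whose maximal equicontinuous factor map has some finite fiber,
the fiber-cardinality function attains a finite minimum `m`, and equals `m` on a dense
`G_δ` subset of the factor. -/
theorem stmt19 {X Y : Type*} [MetricSpace X] [CompactSpace X] [MetricSpace Y] [CompactSpace Y]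
    (T : X ≃ₜ X) (S : Y ≃ₜ Y) (π : X → Y)
    (hπc : Continuous π) (hπs : Function.Surjective π)
    (hfac : ∀ x, π (T x) = S (π x))
    (hminX : ∀ x : X, Dense (Set.range fun n : ℕ => (⇑T)^[n] x))
    (hminY : ∀ y : Y, Dense (Set.range fun n : ℕ => (⇑S)^[n] y))
    (heq : Equicontinuous fun n : ℕ => (⇑S)^[n])
    (hfin : ∃ y₀ : Y, (π ⁻¹' {y₀}).Finite) :
    ∃ m : ℕ, 0 < m ∧
      (∃ y : Y, (π ⁻¹' {y}).Finite ∧ (π ⁻¹' {y}).ncard = m) ∧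
      (∀ y : Y, (π ⁻¹' {y}).Finite → m ≤ (π ⁻¹' {y}).ncard) ∧
      ∃ G : Set Y, Dense G ∧ IsGδ G ∧
        ∀ y ∈ G, (π ⁻¹' {y}).Finite ∧ (π ⁻¹' {y}).ncard = m := by
  classical
  obtain ⟨y₀, hy₀⟩ := hfin
  -- factor relation for iterates
  have hfacn : ∀ (n : ℕ) (x : X), π ((⇑T)^[n] x) = (⇑S)^[n] (π x) := by
    intro n
    induction n with
    | zero => intro x; simp
    | succ n ih =>
      intro x
      rw [Function.iterate_succ_apply', Function.iterate_succ_apply', hfac, ih]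
  -- fibers along the orbit
  have hfiber : ∀ (n : ℕ) (y : Y),
      π ⁻¹' {(⇑S)^[n] y} = (⇑T)^[n] '' (π ⁻¹' {y}) := by
    intro n y
    ext x
    simp only [Set.mem_preimage, Set.mem_singleton_iff, Set.mem_image]
    constructor
    · intro hx
      refine ⟨(⇑T.symm)^[n] x, ?_, ?_⟩
      · have hTx : (⇑T)^[n] ((⇑T.symm)^[n] x) = x :=
          (Function.RightInverse.iterate T.right_inv n) x
        have : (⇑S)^[n] (π ((⇑T.symm)^[n] x)) = (⇑S)^[n] y := by
          rw [← hfacn n, hTx, hx]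
        exact (S.injective.iterate n) this
      · exact (Function.RightInverse.iterate T.right_inv n) x
    · rintro ⟨z, hz, rfl⟩
      rw [hfacn n, hz]
  -- set of attained finite fiber cardinalities
  set V : Set ℕ := {n | ∃ y : Y, (π ⁻¹' {y}).Finite ∧ (π ⁻¹' {y}).ncard = n} with hV
  have hVne : V.Nonempty := ⟨(π ⁻¹' {y₀}).ncard, y₀, hy₀, rfl⟩
  set m : ℕ := sInf V with hm
  obtain ⟨ystar, hystarf, hystarc⟩ : m ∈ V := Nat.sInf_mem hVne
  have hmin : ∀ y : Y, (π ⁻¹' {y}).Finite → m ≤ (π ⁻¹' {y}).ncard := by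
    intro y hy
    exact Nat.sInf_le ⟨y, hy, rfl⟩
  have hmpos : 0 < m := by
    obtain ⟨x, hx⟩ := hπs ystar
    rw [← hystarc]
    exact (Set.ncard_pos hystarf).mpr ⟨x, hx⟩
  -- the open sets
  set U : ℝ → Set Y := fun ε =>
    {y | ∃ F : Finset X, F.card ≤ m ∧ π ⁻¹' {y} ⊆ ⋃ x ∈ F, Metric.ball x ε} with hU
  have hUopen : ∀ ε : ℝ, IsOpen (U ε) := by
    intro ε
    rw [isOpen_iff_mem_nhds]
    rintro y ⟨F, hFcard, hFsub⟩
    set W : Set X := ⋃ x ∈ F, Metric.ball x ε with hW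
    have hWopen : IsOpen W := isOpen_biUnion fun x _ => Metric.isOpen_ball
    have hC : IsClosed (π '' Wᶜ) := hπc.isClosedMap _ hWopen.isClosed_compl
    refine mem_nhds_iff.mpr ⟨(π '' Wᶜ)ᶜ, ?_, hC.isOpen_compl, ?_⟩
    · intro y' hy'
      refine ⟨F, hFcard, ?_⟩
      intro x hx
      by_contra hxW
      exact hy' ⟨x, hxW, hx⟩
    · rintro ⟨x, hxW, hxy⟩
      exact hxW (hFsub hxy)
  -- points with minimal finite fiber belong to every U ε
  have hGsubU : ∀ (y : Y), (π ⁻¹' {y}).Finite → (π ⁻¹' {y}).ncard = m →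
      ∀ ε : ℝ, 0 < ε → y ∈ U ε := by
    intro y hyf hyc ε hε
    refine ⟨hyf.toFinset, ?_, ?_⟩
    · rw [← Set.ncard_eq_toFinset_card _ hyf, hyc]
    · intro x hx
      exact Set.mem_biUnion (hyf.mem_toFinset.mpr hx) (Metric.mem_ball_self hε)
  -- the Gδ set
  refine ⟨m, hmpos, ⟨ystar, hystarf, hystarc⟩, hmin,
    ⋂ k : ℕ, U (1 / (k + 1)), ?_, ?_, ?_⟩
  · -- density: the orbit of ystar is contained in the intersection
    refine Dense.mono ?_ (hminY ystar)
    rintro y ⟨n, rfl⟩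
    have hfy : π ⁻¹' {(⇑S)^[n] ystar} = (⇑T)^[n] '' (π ⁻¹' {ystar}) := hfiber n ystar
    have hfin' : (π ⁻¹' {(⇑S)^[n] ystar}).Finite := by
      rw [hfy]; exact hystarf.image _
    have hcard' : (π ⁻¹' {(⇑S)^[n] ystar}).ncard = m := by
      rw [hfy, Set.ncard_image_of_injective _ (T.injective.iterate n), hystarc]
    refine Set.mem_iInter.mpr fun k => hGsubU _ hfin' hcard' _ ?_
    positivity
  · exact IsGδ.iInter fun k => (hUopen _).isGδ
  · -- every point of the intersection has fiber of cardinality exactly m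
    intro y hy
    rw [Set.mem_iInter] at hy
    -- no m+1 distinct points in the fiber
    have hno : ∀ F₀ : Finset X, ↑F₀ ⊆ π ⁻¹' {y} → F₀.card ≤ m := by
      intro F₀ hF₀sub
      by_contra hlt
      push_neg at hlt
      have h2 : 1 < F₀.card := lt_of_le_of_lt hmpos hlt
      have hod : (F₀.offDiag).Nonempty := by
        obtain ⟨a, ha, b, hb, hab⟩ := Finset.one_lt_card.mp h2
        exact ⟨(a, b), Finset.mem_offDiag.mpr ⟨ha, hb, hab⟩⟩
      set δ : ℝ := F₀.offDiag.inf' hod (fun p => dist p.1 p.2) with hδ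
      have hδpos : 0 < δ := by
        rw [hδ, Finset.lt_inf'_iff]
        rintro ⟨a, b⟩ hab
        exact dist_pos.mpr (Finset.mem_offDiag.mp hab).2.2
      obtain ⟨k, hk⟩ := exists_nat_one_div_lt (half_pos hδpos)
      obtain ⟨F, hFcard, hFsub⟩ := hy k
      -- choose a center for each point of F₀
      have hch : ∀ p ∈ F₀, ∃ c ∈ F, p ∈ Metric.ball c (1 / (k + 1)) := by
        intro p hp
        have := hFsub (hF₀sub hp)
        simpa using this
      set f : X → X := fun p =>
        if h : ∃ c ∈ F, p ∈ Metric.ball c (1 / (k + 1)) then h.choose else p with hf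
      have hmaps : ∀ p ∈ F₀, f p ∈ F := by
        intro p hp
        have h := hch p hp
        simp only [hf, dif_pos h]
        exact h.choose_spec.1
      have hballs : ∀ p ∈ F₀, dist p (f p) < 1 / (k + 1) := by
        intro p hp
        have h := hch p hp
        simp only [hf, dif_pos h]
        exact h.choose_spec.2
      obtain ⟨a, ha, b, hb, hab, hfab⟩ :=
        Finset.exists_ne_map_eq_of_card_lt_of_maps_to (lt_of_le_of_lt hFcard hlt) hmaps
      have hdab : dist a b < δ := by
        calc dist a b ≤ dist a (f a) + dist (f b) b := by
              rw [hfab]; exact dist_triangle _ _ _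
          _ < 1 / (k + 1) + 1 / (k + 1) := by
              have h1 := hballs a ha
              have h2 := hballs b hb
              rw [dist_comm] at h2
              linarith
          _ < δ := by
              have : (1 : ℝ) / (k + 1) < δ / 2 := by exact_mod_cast hk
              linarith
      have hle : δ ≤ dist a b :=
        Finset.inf'_le (fun p => dist p.1 p.2)
          (show (a, b) ∈ F₀.offDiag from Finset.mem_offDiag.mpr ⟨ha, hb, hab⟩)
      linarith
    have hyfin : (π ⁻¹' {y}).Finite := by
      by_contra hinf
      obtain ⟨t, hts, htf, htc⟩ :=
        (Set.Infinite.exists_subset_ncard_eq hinf (m + 1))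
      have : htf.toFinset.card ≤ m := by
        refine hno _ ?_
        rw [Set.Finite.coe_toFinset]
        exact hts
      rw [← Set.ncard_eq_toFinset_card _ htf, htc] at this
      omega
    have hle : (π ⁻¹' {y}).ncard ≤ m := by
      rw [Set.ncard_eq_toFinset_card _ hyfin]
      exact hno _ (by rw [Set.Finite.coe_toFinset])
    exact ⟨hyfin, le_antisymm hle (hmin y hyfin)⟩
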